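/- Let π be a partition of the finite set U = {u_1,…,u_n} with point probabilities p_i ≥ 0 summing to 1. Then tr[ρ(π)²] = Σ_{B ∈ π} Pr(B)², and therefore h(π) = 1 − tr[ρ(π)²]. -/

import Mathlib

open Finset
open scoped Classical

noncomputable section

/-- A partition of the finite set `Fin n`: a collection of nonempty,
pairwise disjoint blocks whose union is all of `Fin n`. -/
structure SetPartition (n : ℕ) where
  parts : Finset (Finset (Fin n))
  nonempty_blocks : ∀ B ∈ parts, B.Nonempty
  disjoint_blocks : ∀ B ∈ parts, ∀ C ∈ parts, B ≠ C → Disjoint B C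
  covers : ∀ i : Fin n, ∃ B ∈ parts, i ∈ B

/-- `i` and `k` lie in the same block of the collection of blocks `P`. -/
def sameBlock {n : ℕ} (P : Finset (Finset (Fin n))) (i k : Fin n) : Prop :=
  ∃ B ∈ P, i ∈ B ∧ k ∈ B

/-- The indit set: ordered pairs lying in the same block. -/
def inditset {n : ℕ} (P : Finset (Finset (Fin n))) : Finset (Fin n × Fin n) :=
  Finset.univ.filter fun q => sameBlock P q.1 q.2

/-- The ditset: ordered pairs lying in different blocks. -/
def ditset {n : ℕ} (P : Finset (Finset (Fin n))) : Finset (Fin n × Fin n) :=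
  Finset.univ.filter fun q => ¬ sameBlock P q.1 q.2

/-- The blocks of the join of two partitions: all nonempty intersections
`B ∩ C` of a block `B` of the first with a block `C` of the second. -/
def joinParts {n : ℕ} (P Q : Finset (Finset (Fin n))) : Finset (Finset (Fin n)) :=
  ((P ×ˢ Q).image fun p => p.1 ∩ p.2).filter fun s => s.Nonempty

/-- Logical entropy: the sum of `p i * p k` over all distinctions `(i, k)`. -/
def lEnt {n : ℕ} (p : Fin n → ℝ) (P : Finset (Finset (Fin n))) : ℝ :=
  ∑ q ∈ ditset P, p q.1 * p q.2

/-- The density matrix of a collection of blocks `P` with point probabilities `p`: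
entry `(i,k)` is `√(p i * p k)` if `i` and `k` are in the same block, else `0`. -/
def rho {n : ℕ} (p : Fin n → ℝ) (P : Finset (Finset (Fin n))) :
    Matrix (Fin n) (Fin n) ℝ :=
  Matrix.of fun i k => if sameBlock P i k then Real.sqrt (p i * p k) else 0

/-- `tr[ρ(π)²] = Σ_{B ∈ π} Pr(B)²`, and therefore the logical entropy satisfies
`h(π) = 1 − tr[ρ(π)²]`. -/
theorem trace_rho_sq_and_entropy {n : ℕ} (p : Fin n → ℝ)
    (hp : ∀ i, 0 ≤ p i) (hsum : ∑ i, p i = 1) (π : SetPartition n) :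
    Matrix.trace (rho p π.parts * rho p π.parts)
        = ∑ B ∈ π.parts, (∑ i ∈ B, p i) ^ 2
      ∧ lEnt p π.parts = 1 - Matrix.trace (rho p π.parts * rho p π.parts) := by

  classical
  -- trace as sum over inditset
  have hsymm : ∀ i k, sameBlock π.parts i k ↔ sameBlock π.parts k i := by
    intro i k
    constructor <;> rintro ⟨B, hB, h1, h2⟩ <;> exact ⟨B, hB, h2, h1⟩
  have htr : Matrix.trace (rho p π.parts * rho p π.parts)
      = ∑ q ∈ inditset π.parts, p q.1 * p q.2 := by
    have : Matrix.trace (rho p π.parts * rho p π.parts)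
        = ∑ i : Fin n, ∑ k : Fin n,
            (if sameBlock π.parts i k then p i * p k else 0) := by
      simp only [Matrix.trace, Matrix.diag, Matrix.mul_apply, rho, Matrix.of_apply]
      refine Finset.sum_congr rfl fun i _ => Finset.sum_congr rfl fun k _ => ?_
      by_cases h : sameBlock π.parts i k
      · rw [if_pos h, if_pos ((hsymm i k).1 h), if_pos h, mul_comm (p k) (p i),
          Real.mul_self_sqrt (mul_nonneg (hp i) (hp k))]
      · rw [if_neg h, if_neg fun h' => h ((hsymm k i).1 h'), if_neg h, mul_zero]
    rw [this, inditset, Finset.sum_filter, ← Finset.sum_product', Finset.univ_product_univ]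
  -- inditset is the disjoint union of B ×ˢ B
  have hindit : inditset π.parts = π.parts.biUnion fun B => B ×ˢ B := by
    ext q
    rw [inditset, Finset.mem_filter]
    simp only [inditset, Finset.mem_filter, Finset.mem_univ, true_and,
      Finset.mem_biUnion, Finset.mem_product, sameBlock]
  have hdisj : ∀ B ∈ π.parts, ∀ C ∈ π.parts, B ≠ C →
      Disjoint (B ×ˢ B) (C ×ˢ C) := by
    intro B hB C hC hne
    have h := π.disjoint_blocks B hB C hC hne
    rw [Finset.disjoint_left] at h ⊢
    rintro ⟨a, b⟩ hab hab'
    rw [Finset.mem_product] at hab hab'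
    exact h hab.1 hab'.1
  have h1 : Matrix.trace (rho p π.parts * rho p π.parts)
      = ∑ B ∈ π.parts, (∑ i ∈ B, p i) ^ 2 := by
    rw [htr, hindit, Finset.sum_biUnion hdisj]
    refine Finset.sum_congr rfl fun B _ => ?_
    rw [Finset.sum_product, sq, Finset.sum_mul_sum]
  refine ⟨h1, ?_⟩
  have htot : (∑ q ∈ inditset π.parts, p q.1 * p q.2)
      + (∑ q ∈ ditset π.parts, p q.1 * p q.2) = 1 := by
    rw [inditset, ditset, Finset.sum_filter_add_sum_filter_not]
    have : (∑ q : Fin n × Fin n, p q.1 * p q.2) = (∑ i, p i) * (∑ i, p i) := by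
      rw [Finset.sum_mul_sum, ← Finset.sum_product', Finset.univ_product_univ]
    rw [this, hsum, one_mul]
  rw [lEnt, htr]
  linarith
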